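/- For every n ≥ 1, a permutation π of {1,…,n} satisfies T^2(π) = id if and only if π avoids both the pattern 2431 and the barred pattern 241-5̄-3. That is, the set of 2-revstack sortable permutations of length n equals the set of permutations of length n containing neither an occurrence of 2431 nor an occurrence of 2413 (as values b,d,a,c with a<b<c<d in this order) having no value e > d between a and c. -/

import Mathlib

private theorem length_takeWhile_ne_lt {w : List ℕ} {m : ℕ} (hm : m ∈ w) :
    (w.takeWhile (· ≠ m)).length < w.length := by
  induction w with
  | nil => cases hm
  | cons a as ih =>
    by_cases ha : a = m
    · subst ha
      simp [List.takeWhile_cons]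
    · rw [List.takeWhile_cons_of_pos (by simpa using ha)]
      have hm' : m ∈ as := by
        rcases List.mem_cons.mp hm with h | h
        · exact absurd h.symm ha
        · exact h
      simpa using Nat.succ_lt_succ (ih hm')

private theorem length_tail_dropWhile_lt {w : List ℕ} (hw : w ≠ []) (p : ℕ → Bool) :
    ((w.dropWhile p).tail).length < w.length := by
  cases hd : w.dropWhile p with
  | nil => simpa using List.length_pos_iff.mpr hw
  | cons x xs =>
    have h1 : (x :: xs).length ≤ w.length := by
      rw [← hd]; exact (List.dropWhile_sublist p).length_le
    simp only [List.tail_cons]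
    exact lt_of_lt_of_le (by simp) h1

/-- The classical stack sort operator on words: `S(ε) = ε` and `S(L m R) = S(L) S(R) m`,
where `m` is the largest entry of the word `L m R`. -/
def stackSort : List ℕ → List ℕ
  | [] => []
  | a :: as =>
    let m := ((a :: as).max?).getD 0
    stackSort ((a :: as).takeWhile (· ≠ m)) ++
      stackSort (((a :: as).dropWhile (· ≠ m)).tail) ++ [m]
termination_by w => w.length
decreasing_by
  · refine length_takeWhile_ne_lt ?_
    have : (a :: as).max? = some (((a :: as).max?).getD 0) := by
      cases h : (a :: as).max? with
      | none => simp [List.max?_eq_none_iff] at h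
      | some b => simp
    exact List.max?_mem this
  · exact length_tail_dropWhile_lt (by simp) _

/-- The revstack sort operator `T = S ∘ rev`. -/
def revstackSort (w : List ℕ) : List ℕ := stackSort w.reverse

/-- The word of the identity permutation of `{1,…,n}`, namely `1 2 ⋯ n`. -/
def idPerm (n : ℕ) : List ℕ := List.range' 1 n

/-- `w` is (the word of) a permutation of `{1,…,n}`. -/
def IsPermWord (n : ℕ) (w : List ℕ) : Prop := w.Perm (idPerm n)

/-- `x` precedes `y` in the word `w`, i.e. the position of `x` is smaller than that of `y`. -/
def Precedes (w : List ℕ) (x y : ℕ) : Prop := w.idxOf x < w.idxOf y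

/-- `w` contains an occurrence of the pattern `132`: values `a < b < c` occurring in
the order `a, c, b`. -/
def Contains132 (w : List ℕ) : Prop :=
  ∃ a b c, a ∈ w ∧ b ∈ w ∧ c ∈ w ∧ a < b ∧ b < c ∧ Precedes w a c ∧ Precedes w c b

/-- `w` contains an occurrence of the pattern `2431`: values `a < b < c < d` occurring in
the order `b, d, c, a`. -/
def Contains2431 (w : List ℕ) : Prop :=
  ∃ a b c d, a ∈ w ∧ b ∈ w ∧ c ∈ w ∧ d ∈ w ∧ a < b ∧ b < c ∧ c < d ∧
    Precedes w b d ∧ Precedes w d c ∧ Precedes w c a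

/-- `w` contains an occurrence of the barred pattern `241 5̄ 3`: values `a < b < c < d`
occurring in the order `b, d, a, c` with no value `e > d` lying between `a` and `c` in `w`. -/
def ContainsBarred24153 (w : List ℕ) : Prop :=
  ∃ a b c d, a ∈ w ∧ b ∈ w ∧ c ∈ w ∧ d ∈ w ∧ a < b ∧ b < c ∧ c < d ∧
    Precedes w b d ∧ Precedes w d a ∧ Precedes w a c ∧
    ¬ ∃ e, e ∈ w ∧ d < e ∧ Precedes w a e ∧ Precedes w e c

/-- The number of descents of a word. -/
def des (w : List ℕ) : ℕ := ((w.zip w.tail).filter (fun p => p.2 < p.1)).length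

/-- The finset of all words of permutations of `{1,…,n}`. -/
def permsOf (n : ℕ) : Finset (List ℕ) := (idPerm n).permutations.toFinset

/-- The finset of `t`-revstack sortable permutations of `{1,…,n}`. -/
def revstackSortable (n t : ℕ) : Finset (List ℕ) :=
  (permsOf n).filter (fun w => revstackSort^[t] w = idPerm n)

/-- The finset of `t`-stack sortable permutations of `{1,…,n}`. -/
def stackSortable (n t : ℕ) : Finset (List ℕ) :=
  (permsOf n).filter (fun w => stackSort^[t] w = idPerm n)

/-- The descent polynomial `W(A;x) = ∑_{π ∈ A} x^{1+des(π)}` of a set of permutations. -/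
noncomputable def descPoly (A : Finset (List ℕ)) : Polynomial ℚ :=
  ∑ w ∈ A, Polynomial.X ^ (1 + des w)

/-- The `m`-th Eulerian polynomial `A_m(x) = ∑_{π ∈ S_m} x^{1+des(π)}`, with `A_0(x) = 1`. -/
noncomputable def eulerianPoly (m : ℕ) : Polynomial ℚ :=
  if m = 0 then 1 else descPoly (permsOf m)

/-- `v_t(n,i)`: the number of `t`-revstack sortable permutations of `{1,…,n}`
with exactly `i` descents. -/
def vNum (t n i : ℕ) : ℕ := ((revstackSortable n t).filter (fun w => des w = i)).card

/-- `w_t(n,i)`: the number of `t`-stack sortable permutations of `{1,…,n}`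
with exactly `i` descents. -/
def wNum (t n i : ℕ) : ℕ := ((stackSortable n t).filter (fun w => des w = i)).card


private theorem takeWhile_eq_left {L R : List ℕ} {m : ℕ} (hL : m ∉ L) :
    (L ++ m :: R).takeWhile (· ≠ m) = L ∧ (L ++ m :: R).dropWhile (· ≠ m) = m :: R := by
  induction L with
  | nil => simp
  | cons a L ih =>
    have ha : a ≠ m := fun h => hL (h ▸ (List.mem_cons_self (a := a) (l := L)))
    have := ih (fun h => hL (List.mem_cons_of_mem a h))
    constructor
    · rw [List.cons_append, List.takeWhile_cons_of_pos (by simpa using ha), this.1]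
    · rw [List.cons_append, List.dropWhile_cons_of_pos (by simpa using ha), this.2]

private theorem split_of_mem {w : List ℕ} {m : ℕ} (hm : m ∈ w) :
    ∃ L R, w = L ++ m :: R ∧ m ∉ L := by
  induction w with
  | nil => cases hm
  | cons a as ih =>
    by_cases ha : a = m
    · exact ⟨[], as, by simp [ha], by simp⟩
    · rcases ih (by rcases List.mem_cons.mp hm with h | h; exact absurd h.symm ha; exact h) with
        ⟨L, R, h1, h2⟩
      exact ⟨a :: L, R, by simp [h1], by simp [ha, h2, Ne.symm]⟩

private theorem max_getD_eq {w : List ℕ} {m : ℕ} (hm : m ∈ w) (hmax : ∀ z ∈ w, z ≤ m) :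
    (w.max?).getD 0 = m := by
  have : w.max? = some m := List.max?_eq_some_iff'.mpr ⟨hm, hmax⟩
  simp [this]

private theorem stackSort_split {L R : List ℕ} {m : ℕ} (hL : m ∉ L)
    (hmax : ∀ z ∈ L ++ m :: R, z ≤ m) :
    stackSort (L ++ m :: R) = stackSort L ++ stackSort R ++ [m] := by
  have hm : m ∈ L ++ m :: R := by simp
  have hM : ((L ++ m :: R).max?).getD 0 = m := max_getD_eq hm hmax
  have htw := takeWhile_eq_left (R := R) hL
  cases hw : L ++ m :: R with
  | nil => simp at hw
  | cons a as =>
    rw [stackSort]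
    rw [← hw, hM, htw.1, htw.2]
    simp

private theorem stackSort_perm : ∀ (N : ℕ) (w : List ℕ), w.length ≤ N → (stackSort w).Perm w := by
  intro N
  induction N with
  | zero =>
    intro w hw
    have : w = [] := List.length_eq_zero_iff.mp (Nat.le_zero.mp hw)
    subst this
    rw [stackSort]
  | succ N ih =>
    intro w hw
    rcases List.eq_nil_or_concat w with rfl | _
    · rw [stackSort]
    by_cases hemp : w = []
    · subst hemp; rw [stackSort]
    have hne : w.max?.isSome := by
      cases w with
      | nil => exact absurd rfl hemp
      | cons a as => simp [List.max?_cons]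
    set m := (w.max?).getD 0 with hm
    have hmem : m ∈ w := by
      have : w.max? = some m := by
        cases h : w.max? with
        | none => rw [h] at hne; simp at hne
        | some b => simp [h, hm]
      exact List.max?_mem this
    have hmax : ∀ z ∈ w, z ≤ m := by
      intro z hz
      exact List.le_max?_getD_of_mem hz
    rcases split_of_mem hmem with ⟨L, R, hsplit, hL⟩
    have hmax' : ∀ z ∈ L ++ m :: R, z ≤ m := hsplit ▸ hmax
    have hlen : w.length = L.length + R.length + 1 := by
      rw [hsplit]; simp; omega
    have hLlen : L.length ≤ N := by omega
    have hRlen : R.length ≤ N := by omega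
    rw [hsplit, stackSort_split hL hmax']
    have p1 : (stackSort L ++ stackSort R ++ [m]).Perm (L ++ R ++ [m]) :=
      ((ih L hLlen).append (ih R hRlen)).append_right _
    have p2 : (L ++ R ++ [m]).Perm (L ++ (m :: R)) := by
      rw [List.append_assoc]
      exact List.Perm.append_left L List.perm_append_comm
    exact p1.trans p2

private theorem revstackSort_perm (w : List ℕ) : (revstackSort w).Perm w :=
  (stackSort_perm w.reverse.length w.reverse le_rfl).trans (List.reverse_perm w)

private theorem revstackSort_split {L R : List ℕ} {m : ℕ} (hR : m ∉ R)
    (hmax : ∀ z ∈ L ++ m :: R, z ≤ m) :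
    revstackSort (L ++ m :: R) = revstackSort R ++ revstackSort L ++ [m] := by
  unfold revstackSort
  have hrev : (L ++ m :: R).reverse = R.reverse ++ m :: L.reverse := by simp
  rw [hrev, stackSort_split (by simpa using hR)]
  intro z hz
  apply hmax
  simp only [List.mem_append, List.mem_cons, List.mem_reverse] at hz ⊢
  tauto

private theorem precedes_append_left {l₁ l₂ : List ℕ} {x y : ℕ} (hx : x ∈ l₁) (hy : y ∈ l₁) :
    Precedes (l₁ ++ l₂) x y ↔ Precedes l₁ x y := by
  unfold Precedes
  rw [List.idxOf_append_of_mem hx, List.idxOf_append_of_mem hy]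

private theorem precedes_append_right {l₁ l₂ : List ℕ} {x y : ℕ} (hx : x ∉ l₁) (hy : y ∉ l₁) :
    Precedes (l₁ ++ l₂) x y ↔ Precedes l₂ x y := by
  unfold Precedes
  rw [List.idxOf_append_of_notMem hx, List.idxOf_append_of_notMem hy]
  omega

private theorem precedes_cross {l₁ l₂ : List ℕ} {x y : ℕ} (hx : x ∈ l₁) (hy : y ∉ l₁) :
    Precedes (l₁ ++ l₂) x y := by
  unfold Precedes
  rw [List.idxOf_append_of_mem hx, List.idxOf_append_of_notMem hy]
  have := List.idxOf_lt_length_iff.mpr hx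
  omega

private theorem precedes_cons {a : ℕ} {l : List ℕ} {x y : ℕ} (hx : x ≠ a) (hy : y ≠ a) :
    Precedes (a :: l) x y ↔ Precedes l x y := by
  unfold Precedes
  rw [List.idxOf_cons_ne _ (Ne.symm hx), List.idxOf_cons_ne _ (Ne.symm hy)]
  omega

private theorem precedes_asymm {w : List ℕ} {x y : ℕ} (h : Precedes w x y) :
    ¬ Precedes w y x := by
  unfold Precedes at *; omega

private theorem precedes_trans {w : List ℕ} {x y z : ℕ} (h1 : Precedes w x y)
    (h2 : Precedes w y z) : Precedes w x z := by
  unfold Precedes at *; omega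

private theorem precedes_total {w : List ℕ} {x y : ℕ} (hx : x ∈ w) (hy : y ∈ w) (hxy : x ≠ y) :
    Precedes w x y ∨ Precedes w y x := by
  have : w.idxOf x ≠ w.idxOf y := fun h => hxy ((List.idxOf_inj hx).mp h)
  unfold Precedes; omega

private theorem precedes_cons_self {a : ℕ} {l : List ℕ} {y : ℕ} (hy : y ∈ l) (hya : y ≠ a) :
    Precedes (a :: l) a y := by
  unfold Precedes
  rw [List.idxOf_cons_self, List.idxOf_cons_ne _ (Ne.symm hya)]
  omega

private theorem indexOf_lt_left {L l₂ : List ℕ} {x : ℕ} (hx : x ∈ L) :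
    (L ++ l₂).idxOf x < L.length := by
  rw [List.idxOf_append_of_mem hx]; exact List.idxOf_lt_length_iff.mpr hx

private theorem indexOf_ge_right {L l₂ : List ℕ} {x : ℕ} (hx : x ∉ L) :
    L.length ≤ (L ++ l₂).idxOf x := by
  rw [List.idxOf_append_of_notMem hx]; omega

private theorem mem_left_of_before {L R : List ℕ} {m x z : ℕ} (hx : x ∈ L)
    (hz : z ∈ L ++ m :: R) (h : Precedes (L ++ m :: R) z x) : z ∈ L := by
  by_contra hzL
  have h1 := indexOf_ge_right (l₂ := m :: R) hzL
  have h2 := indexOf_lt_left (l₂ := m :: R) hx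
  unfold Precedes at h; omega

private theorem indexOf_right_ge {L R : List ℕ} {m x : ℕ} (hxL : x ∉ L) (hxm : x ≠ m) :
    L.length + 1 ≤ (L ++ m :: R).idxOf x := by
  rw [List.idxOf_append_of_notMem hxL, List.idxOf_cons_ne _ (Ne.symm hxm)]
  omega

private theorem mem_right_of_after {L R : List ℕ} {m x z : ℕ} (hxL : x ∉ L) (hxm : x ≠ m)
    (hmL : m ∉ L) (hz : z ∈ L ++ m :: R) (h : Precedes (L ++ m :: R) x z) : z ∈ R := by
  have h1 := indexOf_right_ge (R := R) hxL hxm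
  rcases List.mem_append.mp hz with hz1 | hz2
  · have := indexOf_lt_left (l₂ := m :: R) hz1
    unfold Precedes at h; omega
  · rcases List.mem_cons.mp hz2 with rfl | hz3
    · have : (L ++ z :: R).idxOf z = L.length := by
        rw [List.idxOf_append_of_notMem hmL, List.idxOf_cons_self]
        omega
      unfold Precedes at h; omega
    · exact hz3

/-- Characterization of `Precedes (revstackSort w) x y` in terms of `w`. -/
private def TP (w : List ℕ) (x y : ℕ) : Prop :=
  (Precedes w y x ∧ (x < y ∨ ∃ z ∈ w, x < z ∧ Precedes w y z ∧ Precedes w z x)) ∨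
  (Precedes w x y ∧ x < y ∧ ∀ z ∈ w, Precedes w x z → Precedes w z y → z ≤ y)

private theorem precedes_right_iff {L R : List ℕ} {m x y : ℕ} (hxL : x ∉ L) (hxm : x ≠ m)
    (hyL : y ∉ L) (hym : y ≠ m) :
    Precedes (L ++ m :: R) x y ↔ Precedes R x y :=
  (precedes_append_right hxL hyL).trans (precedes_cons hxm hym)

private theorem TP_left {L R : List ℕ} {m x y : ℕ} (hx : x ∈ L) (hy : y ∈ L) :
    TP (L ++ m :: R) x y ↔ TP L x y := by
  unfold TP
  constructor
  · rintro (⟨h1, h2⟩ | ⟨h1, h2, h3⟩)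
    · left
      refine ⟨(precedes_append_left hy hx).mp h1, ?_⟩
      rcases h2 with h2 | ⟨z, hz, hxz, hyz, hzx⟩
      · exact Or.inl h2
      · have hzL : z ∈ L := mem_left_of_before hx hz hzx
        exact Or.inr ⟨z, hzL, hxz, (precedes_append_left hy hzL).mp hyz,
          (precedes_append_left hzL hx).mp hzx⟩
    · right
      refine ⟨(precedes_append_left hx hy).mp h1, h2, ?_⟩
      intro z hz hxz hzy
      exact h3 z (by simp [hz]) ((precedes_append_left hx hz).mpr hxz)
        ((precedes_append_left hz hy).mpr hzy)
  · rintro (⟨h1, h2⟩ | ⟨h1, h2, h3⟩)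
    · left
      refine ⟨(precedes_append_left hy hx).mpr h1, ?_⟩
      rcases h2 with h2 | ⟨z, hz, hxz, hyz, hzx⟩
      · exact Or.inl h2
      · exact Or.inr ⟨z, by simp [hz], hxz, (precedes_append_left hy hz).mpr hyz,
          (precedes_append_left hz hx).mpr hzx⟩
    · right
      refine ⟨(precedes_append_left hx hy).mpr h1, h2, ?_⟩
      intro z hz hxz hzy
      have hzL : z ∈ L := mem_left_of_before hy hz hzy
      exact h3 z hzL ((precedes_append_left hx hzL).mp hxz) ((precedes_append_left hzL hy).mp hzy)

private theorem TP_right {L R : List ℕ} {m x y : ℕ} (hmL : m ∉ L) (hmR : m ∉ R)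
    (hLR : ∀ a ∈ L, a ∉ R) (hx : x ∈ R) (hy : y ∈ R) :
    TP (L ++ m :: R) x y ↔ TP R x y := by
  have hnotL : ∀ a, a ∈ R → a ∉ L := fun a haR haL => hLR a haL haR
  have hnotm : ∀ a, a ∈ R → a ≠ m := fun a haR h => hmR (h ▸ haR)
  have hxL := hnotL x hx; have hxm := hnotm x hx
  have hyL := hnotL y hy; have hym := hnotm y hy
  unfold TP
  constructor
  · rintro (⟨h1, h2⟩ | ⟨h1, h2, h3⟩)
    · left
      refine ⟨(precedes_right_iff hyL hym hxL hxm).mp h1, ?_⟩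
      rcases h2 with h2 | ⟨z, hz, hxz, hyz, hzx⟩
      · exact Or.inl h2
      · have hzR : z ∈ R := mem_right_of_after hyL hym hmL hz hyz
        exact Or.inr ⟨z, hzR, hxz,
          (precedes_right_iff hyL hym (hnotL z hzR) (hnotm z hzR)).mp hyz,
          (precedes_right_iff (hnotL z hzR) (hnotm z hzR) hxL hxm).mp hzx⟩
    · right
      refine ⟨(precedes_right_iff hxL hxm hyL hym).mp h1, h2, ?_⟩
      intro z hz hxz hzy
      exact h3 z (by simp [hz])
        ((precedes_right_iff hxL hxm (hnotL z hz) (hnotm z hz)).mpr hxz)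
        ((precedes_right_iff (hnotL z hz) (hnotm z hz) hyL hym).mpr hzy)
  · rintro (⟨h1, h2⟩ | ⟨h1, h2, h3⟩)
    · left
      refine ⟨(precedes_right_iff hyL hym hxL hxm).mpr h1, ?_⟩
      rcases h2 with h2 | ⟨z, hz, hxz, hyz, hzx⟩
      · exact Or.inl h2
      · exact Or.inr ⟨z, by simp [hz], hxz,
          (precedes_right_iff hyL hym (hnotL z hz) (hnotm z hz)).mpr hyz,
          (precedes_right_iff (hnotL z hz) (hnotm z hz) hxL hxm).mpr hzx⟩
    · right
      refine ⟨(precedes_right_iff hxL hxm hyL hym).mpr h1, h2, ?_⟩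
      intro z hz hxz hzy
      have hzR : z ∈ R := mem_right_of_after hxL hxm hmL hz hxz
      exact h3 z hzR
        ((precedes_right_iff hxL hxm (hnotL z hzR) (hnotm z hzR)).mp hxz)
        ((precedes_right_iff (hnotL z hzR) (hnotm z hzR) hyL hym).mp hzy)

private theorem T_precedes : ∀ (N : ℕ) (w : List ℕ), w.length ≤ N → w.Nodup →
    ∀ x ∈ w, ∀ y ∈ w, x ≠ y → (Precedes (revstackSort w) x y ↔ TP w x y) := by
  intro N
  induction N with
  | zero =>
    intro w hw _ x hx
    have : w = [] := List.length_eq_zero_iff.mp (Nat.le_zero.mp hw)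
    subst this; cases hx
  | succ N ih =>
    intro w hw hnd x hx y hy hxy
    have hemp : w ≠ [] := by rintro rfl; cases hx
    obtain ⟨m, hm'⟩ : ∃ m, w.max? = some m := by
      cases h : w.max? with
      | none => exact absurd (List.max?_eq_none_iff.mp h) hemp
      | some b => exact ⟨b, rfl⟩
    obtain ⟨hmem, hmax⟩ := List.max?_eq_some_iff'.mp hm'
    rcases split_of_mem hmem with ⟨L, R, hsplit, hmL⟩
    subst hsplit
    rw [List.nodup_append] at hnd
    obtain ⟨hndL, hndmR, hdisj⟩ := hnd
    obtain ⟨hmR, hndR⟩ := List.nodup_cons.mp hndmR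
    have hLR : ∀ a ∈ L, a ∉ R := fun a ha h => hdisj a ha a (List.mem_cons_of_mem _ h) rfl
    have hLlen : L.length ≤ N := by have := hw; simp at this; omega
    have hRlen : R.length ≤ N := by have := hw; simp at this; omega
    rw [revstackSort_split hmR hmax]
    have memTL : ∀ a, a ∈ revstackSort L ↔ a ∈ L := fun a => (revstackSort_perm L).mem_iff
    have memTR : ∀ a, a ∈ revstackSort R ↔ a ∈ R := fun a => (revstackSort_perm R).mem_iff
    have hmT : m ∉ revstackSort R ++ revstackSort L := by
      intro h
      rcases List.mem_append.mp h with h | h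
      exacts [hmR ((memTR m).mp h), hmL ((memTL m).mp h)]
    have hprec_m_right : ∀ a ∈ R, a ≠ m → Precedes (L ++ m :: R) m a := fun a haR ham =>
      (precedes_append_right hmL (fun h => hLR a h haR)).mpr (precedes_cons_self haR ham)
    have hxLmR : x ∈ L ∨ x = m ∨ x ∈ R := by simpa using hx
    have hyLmR : y ∈ L ∨ y = m ∨ y ∈ R := by simpa using hy
    rcases hxLmR with hxL | rfl | hxR
    · have hxT : x ∈ revstackSort R ++ revstackSort L :=
        List.mem_append.mpr (Or.inr ((memTL x).mpr hxL))
      have hxTR : x ∉ revstackSort R := fun h => hLR x hxL ((memTR x).mp h)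
      rcases hyLmR with hyL | rfl | hyR
      · -- x, y ∈ L
        have hyT : y ∈ revstackSort R ++ revstackSort L :=
          List.mem_append.mpr (Or.inr ((memTL y).mpr hyL))
        have hyTR : y ∉ revstackSort R := fun h => hLR y hyL ((memTR y).mp h)
        rw [precedes_append_left hxT hyT, precedes_append_right hxTR hyTR,
          ih L hLlen hndL x hxL y hyL hxy, ← TP_left hxL hyL]
      · -- x ∈ L, y = m
        refine iff_of_true (precedes_cross hxT hmT)
          (Or.inr ⟨precedes_cross hxL hmL, ?_, fun z hz _ _ => hmax z hz⟩)
        exact lt_of_le_of_ne (hmax x hx) hxy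
      · -- x ∈ L, y ∈ R
        have hym : y ≠ m := fun h => hmR (h ▸ hyR)
        have hyTR : y ∈ revstackSort R := (memTR y).mpr hyR
        have hyT : y ∈ revstackSort R ++ revstackSort L := List.mem_append.mpr (Or.inl hyTR)
        have hyx : Precedes (revstackSort R ++ revstackSort L ++ [m]) y x :=
          (precedes_append_left hyT hxT).mpr (precedes_cross hyTR hxTR)
        refine iff_of_false (precedes_asymm hyx) ?_
        rintro (⟨h1, _⟩ | ⟨_, _, h3⟩)
        · exact precedes_asymm (precedes_cross hxL (fun h => hLR y h hyR)) h1
        · have := h3 m (by simp) (precedes_cross hxL hmL) (hprec_m_right y hyR hym)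
          exact absurd this (Nat.not_le.mpr (lt_of_le_of_ne (hmax y hy) hym))
    · -- x = m
      have hym : y ≠ x := Ne.symm hxy
      have hyT : y ∈ revstackSort R ++ revstackSort L := by
        rcases hyLmR with h | rfl | h
        · exact List.mem_append.mpr (Or.inr ((memTL y).mpr h))
        · exact absurd rfl hym
        · exact List.mem_append.mpr (Or.inl ((memTR y).mpr h))
      refine iff_of_false (precedes_asymm (precedes_cross hyT hmT)) ?_
      rintro (⟨_, (h2 | ⟨z, hz, hmz, _, _⟩)⟩ | ⟨_, h2, _⟩)
      · exact absurd h2 (Nat.not_lt.mpr (hmax y hy))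
      · exact absurd hmz (Nat.not_lt.mpr (hmax z hz))
      · exact absurd h2 (Nat.not_lt.mpr (hmax y hy))
    · have hxm : x ≠ m := fun h => hmR (h ▸ hxR)
      have hxTR : x ∈ revstackSort R := (memTR x).mpr hxR
      have hxT : x ∈ revstackSort R ++ revstackSort L := List.mem_append.mpr (Or.inl hxTR)
      rcases hyLmR with hyL | rfl | hyR
      · -- x ∈ R, y ∈ L
        have hyTR : y ∉ revstackSort R := fun h => hLR y hyL ((memTR y).mp h)
        have hyT : y ∈ revstackSort R ++ revstackSort L :=
          List.mem_append.mpr (Or.inr ((memTL y).mpr hyL))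
        have hLHS : Precedes (revstackSort R ++ revstackSort L ++ [m]) x y :=
          (precedes_append_left hxT hyT).mpr (precedes_cross hxTR hyTR)
        refine iff_of_true hLHS (Or.inl ⟨precedes_cross hyL (fun h => hLR x h hxR), ?_⟩)
        by_cases hlt : x < y
        · exact Or.inl hlt
        · exact Or.inr ⟨m, by simp, lt_of_le_of_ne (hmax x hx) hxm,
            precedes_cross hyL hmL, hprec_m_right x hxR hxm⟩
      · -- x ∈ R, y = m
        exact iff_of_true (precedes_cross hxT hmT)
          (Or.inl ⟨hprec_m_right x hxR hxm, Or.inl (lt_of_le_of_ne (hmax x hx) hxm)⟩)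
      · -- x, y ∈ R
        have hyTR : y ∈ revstackSort R := (memTR y).mpr hyR
        have hyT : y ∈ revstackSort R ++ revstackSort L := List.mem_append.mpr (Or.inl hyTR)
        rw [precedes_append_left hxT hyT, precedes_append_left hxTR hyTR,
          ih R hRlen hndR x hxR y hyR hxy, ← TP_right hmL hmR hLR hxR hyR]

private theorem indexOf_get_self {l : List ℕ} (hnd : l.Nodup) (i : Fin l.length) :
    l.idxOf (l.get i) = i := by
  have hm : l.get i ∈ l := l.get_mem i
  have h1 : l.idxOf (l.get i) < l.length := List.idxOf_lt_length_iff.mpr hm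
  have h2 : l.get ⟨l.idxOf (l.get i), h1⟩ = l.get i := List.idxOf_get h1
  have h3 := List.nodup_iff_injective_get.mp hnd h2
  exact congrArg Fin.val h3

private theorem sorted_iff_precedes {l : List ℕ} (hnd : l.Nodup) :
    l.Pairwise (· < ·) ↔ ∀ x ∈ l, ∀ y ∈ l, x < y → Precedes l x y := by
  constructor
  · intro hs x hx y hy hxy
    have hix := List.idxOf_lt_length_iff.mpr hx
    have hiy := List.idxOf_lt_length_iff.mpr hy
    have hgx : l.get ⟨l.idxOf x, hix⟩ = x := List.idxOf_get hix
    have hgy : l.get ⟨l.idxOf y, hiy⟩ = y := List.idxOf_get hiy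
    rcases Nat.lt_trichotomy (l.idxOf x) (l.idxOf y) with h | h | h
    · exact h
    · exfalso
      have : x = y := by rw [← hgx, ← hgy]; congr 1; exact Fin.ext h
      omega
    · exfalso
      have := hs.rel_get_of_lt (show (⟨l.idxOf y, hiy⟩ : Fin l.length) < ⟨l.idxOf x, hix⟩ from h)
      rw [hgx, hgy] at this
      omega
  · intro h
    rw [List.pairwise_iff_get]
    intro i j hij
    have hi : l.get i ∈ l := l.get_mem i
    have hj : l.get j ∈ l := l.get_mem j
    have hne : l.get i ≠ l.get j := fun he => by
      have := List.nodup_iff_injective_get.mp hnd he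
      subst this; exact absurd hij (lt_irrefl _)
    rcases Nat.lt_trichotomy (l.get i) (l.get j) with hlt | he | hgt
    · exact hlt
    · exact absurd he hne
    · exfalso
      have hp := h _ hj _ hi hgt
      unfold Precedes at hp
      rw [indexOf_get_self hnd, indexOf_get_self hnd] at hp
      exact absurd hij (by omega)

private theorem idPerm_sorted (n : ℕ) : (idPerm n).Pairwise (· < ·) :=
  List.pairwise_lt_range'

private theorem idPerm_nodup (n : ℕ) : (idPerm n).Nodup := List.nodup_range'

private theorem T_eq_id_iff {n : ℕ} {w : List ℕ} (hw : IsPermWord n w) :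
    revstackSort w = idPerm n ↔ ¬ Contains132 w := by
  have hw' : w.Perm (idPerm n) := hw
  have hndw : w.Nodup := hw'.nodup_iff.mpr (idPerm_nodup n)
  have hTp : (revstackSort w).Perm (idPerm n) := (revstackSort_perm w).trans hw'
  have hndT : (revstackSort w).Nodup := hTp.nodup_iff.mpr (idPerm_nodup n)
  have memT : ∀ a, a ∈ revstackSort w ↔ a ∈ w := fun a => (revstackSort_perm w).mem_iff
  constructor
  · intro he hc
    obtain ⟨a, b, c, ha, hb, hc', hab, hbc, hac, hcb⟩ := hc
    have hsorted : (revstackSort w).Pairwise (· < ·) := he ▸ idPerm_sorted n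
    have hPrec := (sorted_iff_precedes hndT).mp hsorted
    have hTP : TP w a b := (T_precedes w.length w le_rfl hndw a ha b hb (Nat.ne_of_lt hab)).mp
      (hPrec a ((memT a).mpr ha) b ((memT b).mpr hb) hab)
    rcases hTP with ⟨h1, _⟩ | ⟨_, _, h3⟩
    · exact precedes_asymm (precedes_trans hac hcb) h1
    · exact absurd (h3 c hc' hac hcb) (Nat.not_le.mpr hbc)
  · intro hnc
    have hsorted : (revstackSort w).Pairwise (· < ·) := by
      rw [sorted_iff_precedes hndT]
      intro x hxT y hyT hxy
      have hx := (memT x).mp hxT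
      have hy := (memT y).mp hyT
      rw [T_precedes w.length w le_rfl hndw x hx y hy (Nat.ne_of_lt hxy)]
      rcases precedes_total hx hy (Nat.ne_of_lt hxy) with hp | hp
      · right
        refine ⟨hp, hxy, ?_⟩
        intro z hz hxz hzy
        by_contra hzy'
        exact hnc ⟨x, y, z, hx, hy, hz, hxy, Nat.lt_of_not_le hzy', hxz, hzy⟩
      · exact Or.inl ⟨hp, Or.inl hxy⟩
    haveI : Std.Antisymm (α := ℕ) (· < ·) := ⟨fun a b h1 h2 => absurd h1 (Nat.lt_asymm h2)⟩
    exact List.Perm.eq_of_pairwise' hsorted (idPerm_sorted n) hTp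

private theorem contains132_T_iff {w : List ℕ} (hnd : w.Nodup) :
    Contains132 (revstackSort w) ↔ Contains2431 w ∨ ContainsBarred24153 w := by
  have memT : ∀ a, a ∈ revstackSort w ↔ a ∈ w := fun a => (revstackSort_perm w).mem_iff
  have hTp : ∀ x, x ∈ w → ∀ y, y ∈ w → x ≠ y →
      (Precedes (revstackSort w) x y ↔ TP w x y) :=
    fun x hx y hy hxy => T_precedes w.length w le_rfl hnd x hx y hy hxy
  constructor
  · rintro ⟨a, b, c, ha, hb, hc, hab, hbc, h1, h2⟩
    have ha' := (memT a).mp ha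
    have hb' := (memT b).mp hb
    have hc' := (memT c).mp hc
    have hTac : TP w a c := (hTp a ha' c hc' (by omega)).mp h1
    have hTcb : TP w c b := (hTp c hc' b hb' (by omega)).mp h2
    rcases hTcb with ⟨hbc', hcb | ⟨d, hd, hcd, hbd, hdc⟩⟩ | ⟨_, hcb, _⟩
    · omega
    · rcases hTac with ⟨hca, _⟩ | ⟨hac', _, hNoZ⟩
      · exact Or.inl ⟨a, b, c, d, ha', hb', hc', hd, hab, hbc, hcd, hbd, hdc, hca⟩
      · refine Or.inr ⟨a, b, c, d, ha', hb', hc', hd, hab, hbc, hcd, hbd, ?_, hac', ?_⟩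
        · rcases precedes_total hd ha' (by omega) with h | h
          · exact h
          · exact absurd (hNoZ d hd h hdc) (by omega)
        · rintro ⟨e, he, hde, hae, hec⟩
          exact absurd (hNoZ e he hae hec) (by omega)
    · omega
  · intro h
    rcases h with ⟨a, b, c, d, ha, hb, hc, hd, hab, hbc, hcd, hbd, hdc, hca⟩ | hB
    · refine ⟨a, b, c, (memT a).mpr ha, (memT b).mpr hb, (memT c).mpr hc, hab, hbc, ?_, ?_⟩
      · rw [hTp a ha c hc (by omega)]
        exact Or.inl ⟨hca, Or.inl (by omega)⟩
      · rw [hTp c hc b hb (by omega)]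
        exact Or.inl ⟨precedes_trans hbd hdc, Or.inr ⟨d, hd, hcd, hbd, hdc⟩⟩
    · obtain ⟨a, b, c, d, ha, hb, hc, hd, hab, hbc, hcd, hbd, hda, hac, hbar⟩ := hB
      have key : ∀ k, ∀ c, w.idxOf c = k → ∀ a b d,
          a ∈ w → b ∈ w → c ∈ w → d ∈ w → a < b → b < c → c < d →
          Precedes w b d → Precedes w d a → Precedes w a c →
          (¬ ∃ e, e ∈ w ∧ d < e ∧ Precedes w a e ∧ Precedes w e c) →
          Contains132 (revstackSort w) := by
        intro k
        induction k using Nat.strong_induction_on with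
        | _ k ih =>
          intro c hk a b d ha hb hc hd hab hbc hcd hbd hda hac hbar
          by_cases hex : ∃ e, e ∈ w ∧ c < e ∧ Precedes w a e ∧ Precedes w e c
          · obtain ⟨e, he, hce, hae, hec⟩ := hex
            have hed : e < d := by
              rcases Nat.lt_trichotomy e d with h | h | h
              · exact h
              · exact absurd (h ▸ hae) (precedes_asymm hda)
              · exact absurd ⟨e, he, h, hae, hec⟩ hbar
            have hlt : w.idxOf e < k := by
              have := hec; unfold Precedes at this; omega
            exact ih (w.idxOf e) hlt e rfl a b d ha hb he hd hab (by omega) hed hbd hda hae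
              (by rintro ⟨f, hf, hdf, haf, hfe⟩
                  exact hbar ⟨f, hf, hdf, haf, precedes_trans hfe hec⟩)
          · refine ⟨a, b, c, (memT a).mpr ha, (memT b).mpr hb, (memT c).mpr hc, hab, hbc, ?_, ?_⟩
            · rw [hTp a ha c hc (by omega)]
              right
              refine ⟨hac, by omega, ?_⟩
              intro z hz haz hzc
              by_contra hzc'
              exact hex ⟨z, hz, by omega, haz, hzc⟩
            · rw [hTp c hc b hb (by omega)]
              exact Or.inl ⟨precedes_trans hbd (precedes_trans hda hac),
                Or.inr ⟨d, hd, hcd, hbd, precedes_trans hda hac⟩⟩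
      exact key (w.idxOf c) c rfl a b d ha hb hc hd hab hbc hcd hbd hda hac hbar

theorem two_revstack_sortable_iff
    (n : ℕ) (hn : 1 ≤ n) (π : List ℕ) (hπ : IsPermWord n π) :
    revstackSort^[2] π = idPerm n ↔ ¬ Contains2431 π ∧ ¬ ContainsBarred24153 π := by
  have hπ' : π.Perm (idPerm n) := hπ
  have hnd : π.Nodup := hπ'.nodup_iff.mpr (idPerm_nodup n)
  have hTperm : IsPermWord n (revstackSort π) := (revstackSort_perm π).trans hπ'
  have h2 : revstackSort^[2] π = revstackSort (revstackSort π) := rfl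
  rw [h2, T_eq_id_iff hTperm, contains132_T_iff hnd, not_or]
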